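/- Let H be a Hilbert space with orthonormal basis (e_i). Let G = (e₁, e₁, e₁, e₂, e₂, e₂, e₃, e₃, e₃, …) and F = (e₁, e₁, −e₁, e₂, e₁, −e₁, e₃, e₁, −e₁, …). Then for g ∈ H, the series Σᵢ ⟨g, fᵢ⟩ gᵢ converges to g if and only if g lies in the closed linear span of {e_i : i ≥ 2}, i.e., ⟨g, e₁⟩ = 0. -/

import Mathlib

open scoped RealInnerProductSpace

/-- With `G = (e₁, e₁, e₁, e₂, e₂, e₂, …)` and `F = (e₁, e₁, −e₁, e₂, e₁, −e₁, …)`,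
the series `Σᵢ ⟨g, fᵢ⟩ gᵢ` converges to `g` iff `⟨g, e₁⟩ = 0`. -/
theorem stmt_4 (H : Type*) [NormedAddCommGroup H] [InnerProductSpace ℝ H]
    (e : HilbertBasis ℕ ℝ H) (g F : ℕ → H)
    (hg : ∀ k : ℕ, g (3 * k) = e k ∧ g (3 * k + 1) = e k ∧ g (3 * k + 2) = e k)
    (hF : ∀ k : ℕ, F (3 * k) = e k ∧ F (3 * k + 1) = e 0 ∧ F (3 * k + 2) = -e 0) :
    ∀ x : H, Filter.Tendsto (fun n => ∑ i ∈ Finset.range n, ⟪x, F i⟫ • g i)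
      Filter.atTop (nhds x) ↔ ⟪x, e 0⟫ = 0 := by
  intro x
  set c : ℝ := ⟪x, e 0⟫ with hc
  set T : ℕ → H := fun m => ∑ k ∈ Finset.range m, ⟪x, e k⟫ • e k with hT
  have hTx : Filter.Tendsto T Filter.atTop (nhds x) := by
    have h1 := e.hasSum_repr x
    have h2 : HasSum (fun k => ⟪x, e k⟫ • e k) x := by
      convert h1 using 2 with k
      rw [e.repr_apply_apply, real_inner_comm]
    exact h2.tendsto_sum_nat
  set S : ℕ → H := fun n => ∑ i ∈ Finset.range n, ⟪x, F i⟫ • g i with hS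
  have key : ∀ m, S (3*m) = T m ∧ S (3*m+1) = T (m+1) ∧ S (3*m+2) = T (m+1) + c • e m := by
    intro m
    induction m with
    | zero =>
      refine ⟨by simp [hS, hT], ?_, ?_⟩
      · simp only [hS, hT]
        rw [show (3*0+1 : ℕ) = 0 + 1 from rfl, Finset.sum_range_succ,
          Finset.sum_range_succ]
        simp [(hF 0).1, (hg 0).1]
      · simp only [hS, hT]
        rw [show (3*0+2 : ℕ) = 1 + 1 from rfl, Finset.sum_range_succ]
        have e1 : S 1 = T 1 + 0 := by
          simp only [hS, hT]
          rw [show (1 : ℕ) = 0 + 1 from rfl, Finset.sum_range_succ, Finset.sum_range_succ]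
          simp [(hF 0).1, (hg 0).1]
        simp only [hS, hT] at e1
        rw [show (1 : ℕ) = 3*0+1 from rfl, (hF 0).2.1, (hg 0).2.1]
        rw [show (3*0+1 : ℕ) = 1 from rfl, e1]
        abel
    | succ m ih =>
      obtain ⟨ih0, ih1, ih2⟩ := ih
      have s1 : S (3*m+3) = T (m+1) := by
        have : S (3*m+3) = S (3*m+2) + ⟪x, F (3*m+2)⟫ • g (3*m+2) := by
          simp only [hS]
          rw [show (3*m+3 : ℕ) = (3*m+2) + 1 by ring, Finset.sum_range_succ]
        rw [this, ih2, (hF m).2.2, (hg m).2.2, inner_neg_right]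
        simp [hc]
      constructor
      · rw [show 3*(m+1) = 3*m+3 by ring]; exact s1
      constructor
      · have : S (3*m+4) = S (3*m+3) + ⟪x, F (3*(m+1))⟫ • g (3*(m+1)) := by
          simp only [hS]
          rw [show (3*m+4 : ℕ) = (3*m+3) + 1 by ring,
            show 3*(m+1) = 3*m+3 by ring, Finset.sum_range_succ]
        rw [show 3*(m+1)+1 = 3*m+4 by ring, this, s1, (hF (m+1)).1, (hg (m+1)).1]
        simp only [hT]
        rw [Finset.sum_range_succ, Finset.sum_range_succ, Finset.sum_range_succ]
      · have h4 : S (3*m+4) = T (m+2) := by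
          have : S (3*m+4) = S (3*m+3) + ⟪x, F (3*(m+1))⟫ • g (3*(m+1)) := by
            simp only [hS]
            rw [show (3*m+4 : ℕ) = (3*m+3) + 1 by ring,
              show 3*(m+1) = 3*m+3 by ring, Finset.sum_range_succ]
          rw [this, s1, (hF (m+1)).1, (hg (m+1)).1]
          simp only [hT]
          rw [Finset.sum_range_succ, Finset.sum_range_succ, Finset.sum_range_succ]
        have : S (3*m+5) = S (3*m+4) + ⟪x, F (3*(m+1)+1)⟫ • g (3*(m+1)+1) := by
          simp only [hS]
          rw [show (3*m+5 : ℕ) = (3*m+4) + 1 by ring,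
            show 3*(m+1)+1 = 3*m+4 by ring, Finset.sum_range_succ]
        rw [show 3*(m+1)+2 = 3*m+5 by ring, this, h4, (hF (m+1)).2.1, (hg (m+1)).2.1]
  constructor
  · intro h
    have t2 : Filter.Tendsto (fun m => S (3*m+2)) Filter.atTop (nhds x) :=
      h.comp (Filter.tendsto_atTop_atTop.mpr fun b => ⟨b, fun a ha => by omega⟩)
    have t3 : Filter.Tendsto (fun m => S (3*(m+1))) Filter.atTop (nhds x) :=
      h.comp (Filter.tendsto_atTop_atTop.mpr fun b => ⟨b, fun a ha => by omega⟩)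
    have hd : Filter.Tendsto (fun m => S (3*m+2) - S (3*(m+1))) Filter.atTop (nhds 0) := by
      have := t2.sub t3
      simpa using this
    have heq : (fun m => S (3*m+2) - S (3*(m+1))) = fun m => c • e m := by
      funext m
      rw [(key m).2.2, (key (m+1)).1]
      abel
    rw [heq] at hd
    have hn : Filter.Tendsto (fun m : ℕ => ‖c • e m‖) Filter.atTop (nhds 0) := by
      simpa using hd.norm
    have hcn : ∀ m : ℕ, ‖c • e m‖ = |c| := by
      intro m
      rw [norm_smul, e.orthonormal.1 m]
      simp
    simp only [hcn] at hn
    have : |c| = 0 := tendsto_nhds_unique tendsto_const_nhds hn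
    exact abs_eq_zero.mp this
  · intro h
    have hSn : ∀ n, S n = T ((n+2)/3) := by
      intro n
      obtain ⟨q, r, hr, hn⟩ : ∃ q r, r < 3 ∧ n = 3*q + r := ⟨n/3, n%3, Nat.mod_lt _ (by norm_num), by omega⟩
      interval_cases r
      · rw [hn, show 3*q+0 = 3*q by ring, (key q).1]; congr 1; omega
      · rw [hn, (key q).2.1]; congr 1; omega
      · rw [hn, (key q).2.2, h]
        simp only [zero_smul, add_zero]
        congr 1; omega
    have hdiv : Filter.Tendsto (fun n : ℕ => (n+2)/3) Filter.atTop Filter.atTop :=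
      Filter.tendsto_atTop_atTop.mpr fun b => ⟨3*b, fun a ha => by omega⟩
    have := hTx.comp hdiv
    exact (Filter.tendsto_congr fun n => (hSn n)).mpr this
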